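/- Let A : ℝ≥0 → ℝ^{n×n} be continuous, bounded, and pointwise commuting in the sense that A(τ) ∫_σ^τ A(s) ds = (∫_σ^τ A(s) ds) A(τ) for all σ, τ ≥ 0. Then the state transition matrix of x' = A(t)x satisfies Φ(τ, σ) = exp(∫_σ^τ A(s) ds). -/

import Mathlib

open Matrix NormedSpace
open scoped Matrix.Norms.L2Operator

theorem stmt_6 {n : ℕ}
    (A : ℝ → Matrix (Fin n) (Fin n) ℝ)
    (hA : Continuous A) (C : ℝ) (hbound : ∀ t, 0 ≤ t → ‖A t‖ ≤ C)
    (hcomm : ∀ σ τ : ℝ, 0 ≤ σ → 0 ≤ τ →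
      A τ * (∫ s in σ..τ, A s) = (∫ s in σ..τ, A s) * A τ)
    (Φ : ℝ → ℝ → Matrix (Fin n) (Fin n) ℝ)
    (hΦinit : ∀ σ, Φ σ σ = 1)
    (hΦode : ∀ σ τ, HasDerivAt (fun u => Φ u σ) (A τ * Φ τ σ) τ) :
    ∀ σ τ : ℝ, 0 ≤ σ → 0 ≤ τ → Φ τ σ = exp (∫ s in σ..τ, A s) := by
  have hInt : ∀ a b : ℝ, IntervalIntegrable A MeasureTheory.volume a b :=
    fun a b => hA.intervalIntegrable a b
  have hMeas : ∀ t : ℝ, StronglyMeasurableAtFilter A (nhds t) :=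
    fun t => hA.stronglyMeasurable.stronglyMeasurableAtFilter
  have hderivR : ∀ a t : ℝ, HasDerivAt (fun u => ∫ s in a..u, A s) (A t) t := fun a t =>
    intervalIntegral.integral_hasDerivAt_right (hInt a t) (hMeas t) hA.continuousAt
  have hderivL : ∀ b t : ℝ, HasDerivAt (fun u => ∫ s in u..b, A s) (-A t) t := fun b t =>
    intervalIntegral.integral_hasDerivAt_left (hInt t b) (hMeas t) hA.continuousAt
  -- pointwise commutativity of A on [0, ∞)
  have hAA : ∀ s t : ℝ, 0 ≤ s → 0 ≤ t → Commute (A s) (A t) := by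
    have hpos : ∀ t s : ℝ, 0 ≤ t → 0 < s → A s * A t = A t * A s := by
      intro t s ht hs
      have hd : HasDerivAt (fun u => A t * (∫ x in u..t, A x) - (∫ x in u..t, A x) * A t)
          (A t * (-A s) - (-A s) * A t) s :=
        ((hderivL t s).const_mul (A t)).sub ((hderivL t s).mul_const (A t))
      have h0 : HasDerivAt (fun u => A t * (∫ x in u..t, A x) - (∫ x in u..t, A x) * A t)
          0 s := by
        refine (hasDerivAt_const s (0 : Matrix (Fin n) (Fin n) ℝ)).congr_of_eventuallyEq ?_
        filter_upwards [eventually_gt_nhds hs] with u hu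
        simp [hcomm u t hu.le ht]
      have h := hd.unique h0
      have h' : A s * A t - A t * A s = 0 := by
        rw [← h]; noncomm_ring
      have := sub_eq_zero.mp h'
      exact this
    intro s t hs ht
    have hF : Continuous (fun u => A u * A t - A t * A u) :=
      (hA.mul continuous_const).sub (continuous_const.mul hA)
    have hEq : Set.EqOn (fun u => A u * A t - A t * A u) 0 (Set.Ioi (0:ℝ)) := by
      intro u hu
      simp only [Pi.zero_apply, sub_eq_zero]
      exact hpos t u ht hu
    have hcl := hEq.closure hF continuous_const
    rw [closure_Ioi] at hcl
    have h0 := hcl hs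
    simp only [Pi.zero_apply, sub_eq_zero] at h0
    exact h0
  -- commuting with interval integrals
  have hcommInt : ∀ (M : Matrix (Fin n) (Fin n) ℝ) (a b : ℝ),
      (∀ x ∈ Set.uIcc a b, Commute M (A x)) → Commute M (∫ s in a..b, A s) := by
    intro M a b h
    have h1 : M * (∫ s in a..b, A s) = ∫ s in a..b, M * A s := by
      have := (ContinuousLinearMap.mul ℝ (Matrix (Fin n) (Fin n) ℝ)
        M).intervalIntegral_comp_comm (hInt a b)
      simpa using this.symm
    have h2 : (∫ s in a..b, A s) * M = ∫ s in a..b, A s * M := by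
      have := ((ContinuousLinearMap.mul ℝ (Matrix (Fin n) (Fin n) ℝ)).flip
        M).intervalIntegral_comp_comm (hInt a b)
      simpa using this.symm
    have h3 : (∫ s in a..b, M * A s) = ∫ s in a..b, A s * M :=
      intervalIntegral.integral_congr fun x hx => (h x hx)
    show M * (∫ s in a..b, A s) = (∫ s in a..b, A s) * M
    rw [h1, h2, h3]
  intro σ τ hσ hτ
  -- key one-sided derivative of v ↦ exp(-∫_σ^v A)
  have key : ∀ u : ℝ, 0 ≤ u →
      HasDerivWithinAt (fun v => exp (-(∫ s in σ..v, A s)))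
        (exp (-(∫ s in σ..u, A s)) * (-A u)) (Set.Ici u) u := by
    intro u hu
    have hsplit : ∀ v ∈ Set.Ici u, exp (-(∫ s in σ..v, A s))
        = exp (-(∫ s in σ..u, A s)) * exp (-(∫ s in u..v, A s)) := by
      intro v hv
      have hadd : (∫ s in σ..v, A s) = (∫ s in σ..u, A s) + ∫ s in u..v, A s :=
        (intervalIntegral.integral_add_adjacent_intervals (hInt σ u) (hInt u v)).symm
      have hc : Commute (∫ s in σ..u, A s) (∫ s in u..v, A s) := by
        refine hcommInt _ u v fun x hx => ?_
        have hx0 : 0 ≤ x := by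
          rcases Set.mem_uIcc.mp hx with h | h
          · exact le_trans hu h.1
          · exact le_trans (le_trans hu hv) h.1
        refine (hcommInt (A x) σ u fun y hy => ?_).symm
        have hy0 : 0 ≤ y := by
          rcases Set.mem_uIcc.mp hy with h | h
          · exact le_trans hσ h.1
          · exact le_trans hu h.1
        exact hAA x y hx0 hy0
      rw [hadd, neg_add, Matrix.exp_add_of_commute _ _ (hc.neg_left.neg_right)]
    have hΔ : HasDerivAt (fun v => -(∫ s in u..v, A s)) (-A u) u := (hderivR u u).neg
    have hzero : (fun v => -(∫ s in u..v, A s)) u = 0 := by simp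
    have hfd : HasFDerivAt (exp)
        (1 : Matrix (Fin n) (Fin n) ℝ →L[ℝ] Matrix (Fin n) (Fin n) ℝ)
        ((fun v => -(∫ s in u..v, A s)) u) := by
      rw [hzero]; exact hasFDerivAt_exp_zero
    have hexpΔ : HasDerivAt (fun v => exp (-(∫ s in u..v, A s))) (-A u) u := by
      have := hfd.comp_hasDerivAt u hΔ
      exact this
    have hconst : HasDerivAt (fun v => exp (-(∫ s in σ..u, A s))
        * exp (-(∫ s in u..v, A s))) (exp (-(∫ s in σ..u, A s)) * (-A u)) u :=
      hexpΔ.const_mul _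
    refine (hconst.hasDerivWithinAt).congr hsplit (hsplit u (Set.self_mem_Ici))
  -- the function exp(-∫)·Φ has zero right-derivative and is hence constant
  set g : ℝ → Matrix (Fin n) (Fin n) ℝ :=
    fun v => exp (-(∫ s in σ..v, A s)) * Φ v σ with hg
  have hgderiv : ∀ u : ℝ, 0 ≤ u → HasDerivWithinAt g 0 (Set.Ici u) u := by
    intro u hu
    have hm := (key u hu).mul ((hΦode σ u).hasDerivWithinAt)
    have : exp (-(∫ s in σ..u, A s)) * (-A u) * Φ u σ
        + exp (-(∫ s in σ..u, A s)) * (A u * Φ u σ) = 0 := by noncomm_ring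
    rwa [this] at hm
  have hgcont : Continuous g := by
    have hB : Continuous fun v => ∫ s in σ..v, A s :=
      continuous_iff_continuousAt.mpr fun v => (hderivR σ v).continuousAt
    have hΦc : Continuous fun v => Φ v σ :=
      continuous_iff_continuousAt.mpr fun v => (hΦode σ v).continuousAt
    letI : NormedAlgebra ℚ (Matrix (Fin n) (Fin n) ℝ) := NormedAlgebra.restrictScalars ℚ ℝ _
    exact (exp_continuous.comp hB.neg).mul hΦc
  have hgσ : g σ = 1 := by
    simp [hg, hΦinit σ, exp_zero]
  have hgτ : g τ = 1 := by
    rcases le_total σ τ with h | h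
    · have := constant_of_has_deriv_right_zero (hgcont.continuousOn)
        (fun x hx => hgderiv x (le_trans hσ hx.1)) τ (Set.right_mem_Icc.mpr h)
      rw [this, hgσ]
    · have := constant_of_has_deriv_right_zero (hgcont.continuousOn)
        (fun x hx => hgderiv x (le_trans hτ hx.1)) σ (Set.right_mem_Icc.mpr h)
      rw [← hgσ, this]
  -- conclude
  have hinv : exp (∫ s in σ..τ, A s) * exp (-(∫ s in σ..τ, A s)) = 1 := by
    rw [← Matrix.exp_add_of_commute _ _ ((Commute.refl (∫ s in σ..τ, A s)).neg_right), add_neg_cancel, exp_zero]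
  calc Φ τ σ = 1 * Φ τ σ := (one_mul _).symm
    _ = exp (∫ s in σ..τ, A s) * exp (-(∫ s in σ..τ, A s)) * Φ τ σ := by rw [hinv]
    _ = exp (∫ s in σ..τ, A s) * g τ := by rw [hg, mul_assoc]
    _ = exp (∫ s in σ..τ, A s) := by rw [hgτ, mul_one]
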